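/- arXiv:2108.02865 — 3 statements merged into one kernel-verified Lean document; each statement's English description precedes it below -/
import Mathlib

section
/- A body B is uniform if, and only if, the mechanical response factors through a single constitutive map up to a field of material isomorphisms: B is uniform (any two points of B are materially isomorphic) if and only if there exist a map W̄ : GL(3,ℝ) → V and a map P : B → GL(3,ℝ) such that W Y F = W̄ (F * P Y) for all Y ∈ B and all F ∈ GL(3,ℝ). (Here B is assumed nonempty.) -/
/-- The general linear group `GL(3, ℝ)`. -/
abbrev GL3 := Matrix.GeneralLinearGroup (Fin 3) ℝ

/-- A (nonempty) body `B` is uniform (any two points are materially isomorphic) if and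
only if there exist a map `W̄ : GL(3,ℝ) → V` and a map `P : B → GL(3,ℝ)` such that
`W Y F = W̄ (F * P Y)` for all `Y ∈ B` and all `F ∈ GL(3,ℝ)`. -/
theorem uniform_iff_factorization {B V : Type*} [Nonempty B] (W : B → GL3 → V) :
    (∀ X Y : B, ∃ P : GL3, ∀ F : GL3, W X (F * P) = W Y F) ↔
      (∃ (Wbar : GL3 → V) (P : B → GL3), ∀ (Y : B) (F : GL3), W Y F = Wbar (F * P Y)) := by
  constructor
  · intro h
    obtain ⟨X₀⟩ := ‹Nonempty B›
    choose P hP using h X₀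
    exact ⟨W X₀, P, fun Y F => (hP Y F).symm⟩
  · rintro ⟨Wbar, P, hP⟩ X Y
    refine ⟨P Y * (P X)⁻¹, fun F => ?_⟩
    rw [hP X, hP Y]; group
end

section
/- The material groupoid of a body-time manifold is transitive if, and only if, the body-time manifold presents a uniform remodeling: all pairs of ℝ × B are pairwise materially isomorphic (i.e. for all (t,X), (s,Y) ∈ ℝ × B there is a material isomorphism from (t,X) to (s,Y)) if and only if every particle X presents a remodeling and there exists an instant t₀ whose state is uniform. (Here B is assumed nonempty.) -/
/-- The material groupoid of a body-time manifold is transitive (any two pairs of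
`ℝ × B` are materially isomorphic) if, and only if, every particle presents a
remodeling and there exists an instant whose state is uniform. -/
theorem transitive_iff_uniform_remodeling {B V : Type*} [Nonempty B]
    (W : ℝ × B → GL3 → V) :
    (∀ p q : ℝ × B, ∃ P : GL3, ∀ F : GL3, W p (F * P) = W q F) ↔
      ((∀ (X : B) (t s : ℝ), ∃ P : GL3, ∀ F : GL3, W (t, X) (F * P) = W (s, X) F) ∧
        ∃ t₀ : ℝ, ∀ X Y : B, ∃ P : GL3, ∀ F : GL3, W (t₀, X) (F * P) = W (t₀, Y) F) := by
  constructor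
  · intro h
    exact ⟨fun X t s => h (t, X) (s, X), 0, fun X Y => h (0, X) (0, Y)⟩
  · rintro ⟨hrem, t₀, huni⟩ ⟨t, X⟩ ⟨s, Y⟩
    obtain ⟨P, hP⟩ := hrem X t t₀
    obtain ⟨Q, hQ⟩ := huni X Y
    obtain ⟨R, hR⟩ := hrem Y t₀ s
    refine ⟨R * Q * P, fun F => ?_⟩
    have : F * (R * Q * P) = F * R * Q * P := by group
    rw [this, hP, hQ, hR]
end

section
/- A body-time manifold presents a uniform remodeling if, and only if, the mechanical response factors through a single constitutive map up to a field of material isomorphisms: all pairs of ℝ × B are pairwise materially isomorphic if and only if there exist a map W̄ : GL(3,ℝ) → V and a map P : ℝ × B → GL(3,ℝ) such that W (s,Y) F = W̄ (F * P (s,Y)) for all (s,Y) ∈ ℝ × B and all F ∈ GL(3,ℝ). (Here B is assumed nonempty.) -/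
/-- A body-time manifold presents a uniform remodeling (all pairs of `ℝ × B` are
pairwise materially isomorphic) if, and only if, there exist a map `W̄ : GL(3,ℝ) → V`
and a map `P : ℝ × B → GL(3,ℝ)` such that `W (s,Y) F = W̄ (F * P (s,Y))` for all
`(s,Y)` and all `F`. -/
theorem uniform_remodeling_iff_factorization {B V : Type*} [Nonempty B]
    (W : ℝ × B → GL3 → V) :
    (∀ p q : ℝ × B, ∃ P : GL3, ∀ F : GL3, W p (F * P) = W q F) ↔
      (∃ (Wbar : GL3 → V) (P : ℝ × B → GL3),
        ∀ (p : ℝ × B) (F : GL3), W p F = Wbar (F * P p)) := by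
  constructor
  · intro h
    set p0 : ℝ × B := (0, Classical.arbitrary B)
    choose P hP using fun q => h p0 q
    exact ⟨W p0, P, fun q F => (hP q F).symm⟩
  · rintro ⟨Wbar, P, hP⟩ p q
    refine ⟨P q * (P p)⁻¹, fun F => ?_⟩
    rw [hP p, hP q]; group
end
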